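/- Let $n\ge 2$ and $2\le m\le n$ be integers, let $\Omega\subset\mathbb{R}^n$ be a bounded open set, let $S=\{x\in\mathbb{R}^n: x_1=\cdots=x_m=0\}$, and write $s(x)=\sqrt{x_1^2+\cdots+x_m^2}$. Let $w:\overline\Omega\to\mathbb{R}$ be a Lipschitz function vanishing on $S\cap\overline\Omega$. Assume that $(m-1)\int_\Omega \frac{w^2\,\eta^2}{s^2}\,dx\ \le\ \int_\Omega w^2\,|\nabla\eta|^2\,dx$ holds for every Lipschitz function $\eta$ with compact support contained in $\Omega\setminus S$. Then the same inequality $(m-1)\int_\Omega \frac{w^2\,\eta^2}{s^2}\,dx\le\int_\Omega w^2\,|\nabla\eta|^2\,dx$ holds for every Lipschitz function $\eta$ with compact support contained in $\Omega$. -/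

import Mathlib

open MeasureTheory Set

noncomputable section HardyAux

variable {n m : ℕ}

/-- The squared distance to the singular set, `Q x = ∑_{l<m} x_l²`. -/
private def Qs (n m : ℕ) (x : EuclideanSpace ℝ (Fin n)) : ℝ :=
  ∑ l : Fin n, if (l : ℕ) < m then x l ^ 2 else 0

private lemma Qs_nonneg (x : EuclideanSpace ℝ (Fin n)) : 0 ≤ Qs n m x :=
  Finset.sum_nonneg fun l _ => by dsimp only; split <;> positivity

private lemma Qs_cont : Continuous (Qs n m) := by
  apply continuous_finset_sum
  intro l _
  by_cases h : (l : ℕ) < m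
  · simp only [if_pos h]
    exact ((continuous_apply l).comp (PiLp.continuous_ofLp (p := 2) (β := fun _ : Fin n => ℝ))).pow 2
  · simp only [if_neg h]
    exact continuous_const

private lemma sq_le_Qs {x : EuclideanSpace ℝ (Fin n)} {l : Fin n} (hl : (l : ℕ) < m) :
    x l ^ 2 ≤ Qs n m x := by
  have := Finset.single_le_sum (f := fun l : Fin n => if (l : ℕ) < m then x l ^ 2 else 0)
    (fun i _ => by dsimp only; split <;> positivity) (Finset.mem_univ l)
  simpa [Qs, if_pos hl] using this

private lemma Qs_eq_zero {x : EuclideanSpace ℝ (Fin n)} :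
    Qs n m x = 0 ↔ ∀ l : Fin n, (l : ℕ) < m → x l = 0 := by
  constructor
  · intro h l hl
    have h1 : x l ^ 2 ≤ 0 := h ▸ sq_le_Qs hl
    have := sq_nonneg (x l)
    nlinarith
  · intro h
    apply Finset.sum_eq_zero
    intro l _
    split
    · rw [h l (by assumption)]; ring
    · rfl

/-- `s x = √(Q x)`. -/
private def sf (n m : ℕ) (x : EuclideanSpace ℝ (Fin n)) : ℝ := Real.sqrt (Qs n m x)

private lemma sf_nonneg (x : EuclideanSpace ℝ (Fin n)) : 0 ≤ sf n m x := Real.sqrt_nonneg _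

private lemma sf_sq (x : EuclideanSpace ℝ (Fin n)) : sf n m x ^ 2 = Qs n m x :=
  Real.sq_sqrt (Qs_nonneg x)

private lemma sf_eq_zero {x : EuclideanSpace ℝ (Fin n)} :
    sf n m x = 0 ↔ ∀ l : Fin n, (l : ℕ) < m → x l = 0 := by
  rw [sf, Real.sqrt_eq_zero (Qs_nonneg x), Qs_eq_zero]

/-- projection onto the first `m` coordinates -/
private def pj (n m : ℕ) (x : EuclideanSpace ℝ (Fin n)) : EuclideanSpace ℝ (Fin n) :=
  WithLp.toLp 2 (fun l => if (l : ℕ) < m then x l else 0)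

private lemma norm_pj (x : EuclideanSpace ℝ (Fin n)) : ‖pj n m x‖ = sf n m x := by
  rw [EuclideanSpace.norm_eq, sf]
  congr 1
  apply Finset.sum_congr rfl
  intro l _
  simp only [pj, PiLp.toLp_apply]
  split <;> simp [sq_abs]

private lemma pj_sub (x y : EuclideanSpace ℝ (Fin n)) :
    pj n m (x - y) = pj n m x - pj n m y := by
  ext l
  simp only [pj, PiLp.sub_apply, PiLp.toLp_apply]
  split <;> simp

private lemma norm_pj_le (x : EuclideanSpace ℝ (Fin n)) : ‖pj n m x‖ ≤ ‖x‖ := by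
  rw [EuclideanSpace.norm_eq, EuclideanSpace.norm_eq]
  apply Real.sqrt_le_sqrt
  apply Finset.sum_le_sum
  intro l _
  simp only [pj, PiLp.toLp_apply]
  split
  · exact le_refl _
  · simp
    positivity

private lemma sf_lip : LipschitzWith 1 (sf n m) := by
  apply LipschitzWith.of_dist_le_mul
  intro x y
  rw [Real.dist_eq, ← norm_pj x, ← norm_pj y, NNReal.coe_one, one_mul, dist_eq_norm]
  calc |‖pj n m x‖ - ‖pj n m y‖| ≤ ‖pj n m x - pj n m y‖ := abs_norm_sub_norm_le _ _
  _ = ‖pj n m (x - y)‖ := by rw [pj_sub]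
  _ ≤ ‖x - y‖ := norm_pj_le _

private lemma sf_cont : Continuous (sf n m) := sf_lip.continuous

private lemma abs_coord_le_norm (x : EuclideanSpace ℝ (Fin n)) (l : Fin n) : |x l| ≤ ‖x‖ := by
  rw [EuclideanSpace.norm_eq, ← Real.sqrt_sq_eq_abs]
  apply Real.sqrt_le_sqrt
  have := Finset.single_le_sum (f := fun i : Fin n => ‖x i‖ ^ 2)
    (fun i _ => by positivity) (Finset.mem_univ l)
  simpa [sq_abs] using this

private lemma lip_mul_bdd {α : Type*} [PseudoMetricSpace α]
    {f g : α → ℝ} {Kf Kg A B : NNReal} (hf : LipschitzWith Kf f) (hg : LipschitzWith Kg g)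
    (hA : ∀ x, |f x| ≤ (A : ℝ)) (hB : ∀ x, |g x| ≤ (B : ℝ)) :
    LipschitzWith (A * Kg + B * Kf) (fun x => f x * g x) := by
  apply LipschitzWith.of_dist_le_mul
  intro x y
  have hg' := hg.dist_le_mul x y
  have hf' := hf.dist_le_mul x y
  rw [Real.dist_eq] at hg' hf' ⊢
  push_cast
  calc |f x * g x - f y * g y| = |f x * (g x - g y) + g y * (f x - f y)| := by ring_nf
  _ ≤ |f x * (g x - g y)| + |g y * (f x - f y)| := abs_add_le _ _
  _ = |f x| * |g x - g y| + |g y| * |f x - f y| := by rw [abs_mul, abs_mul]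
  _ ≤ (A : ℝ) * ((Kg : ℝ) * dist x y) + (B : ℝ) * ((Kf : ℝ) * dist x y) := by
      gcongr
      · exact hA x
      · exact hB y
  _ = ((A : ℝ) * (Kg : ℝ) + (B : ℝ) * (Kf : ℝ)) * dist x y := by ring

end HardyAux
noncomputable section HardyCut
variable {n m : ℕ}

/-- cutoff profile -/
private def cutf (δ t : ℝ) : ℝ := min 1 (max 0 (t / δ - 1))

private lemma cutf_nonneg {δ t : ℝ} : 0 ≤ cutf δ t := le_min zero_le_one (le_max_left _ _)

private lemma cutf_le_one {δ t : ℝ} : cutf δ t ≤ 1 := min_le_left _ _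

private lemma cutf_eq_zero {δ t : ℝ} (hδ : 0 < δ) (h : t < δ) : cutf δ t = 0 := by
  have h1 : t / δ - 1 < 0 := by
    rw [sub_neg]
    exact (div_lt_one hδ).2 h
  rw [cutf, max_eq_left h1.le, min_eq_right zero_le_one]

private lemma cutf_eq_one {δ t : ℝ} (hδ : 0 < δ) (h : 2 * δ ≤ t) : cutf δ t = 1 := by
  have h1 : (2:ℝ) ≤ t / δ := (le_div_iff₀ hδ).2 (by linarith)
  rw [cutf, max_eq_right (by linarith), min_eq_left (by linarith)]

private lemma cutf_mono_delta {δ δ' t : ℝ} (ht : 0 ≤ t) (h0 : 0 < δ') (h : δ' ≤ δ) :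
    cutf δ t ≤ cutf δ' t := by
  unfold cutf
  have : t / δ ≤ t / δ' := by
    apply div_le_div_of_nonneg_left ht h0 h
  exact min_le_min (le_refl _) (max_le_max (le_refl _) (by linarith))

private lemma cutf_lip {δ a b : ℝ} (hδ : 0 < δ) : |cutf δ a - cutf δ b| ≤ |a - b| / δ := by
  calc |cutf δ a - cutf δ b| ≤ max |1 - 1| |max 0 (a/δ-1) - max 0 (b/δ-1)| :=
        abs_min_sub_min_le_max _ _ _ _
  _ = |max 0 (a/δ-1) - max 0 (b/δ-1)| := by simp
  _ ≤ max |0 - 0| |(a/δ-1) - (b/δ-1)| := abs_max_sub_max_le_max _ _ _ _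
  _ = |(a - b)/δ| := by rw [show (a/δ-1) - (b/δ-1) = (a-b)/δ by ring]; simp
  _ = |a - b| / δ := by rw [abs_div, abs_of_pos hδ]
end HardyCut

set_option maxHeartbeats 2000000 in
/-- Removable-singularity step (proof of Lemma 2.3): if the Hardy-type inequality
`(m-1) ∫_Ω w²η²/s² ≤ ∫_Ω w²|∇η|²` holds for all Lipschitz `η` compactly supported in
`Ω ∖ S`, where `S = {x₁ = ⋯ = x_m = 0}` and `w` is Lipschitz on `Ω̄` and vanishes on
`S ∩ Ω̄`, then it holds for all Lipschitz `η` compactly supported in `Ω`. -/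
theorem hardy_inequality_removable_singularity
    (n m : ℕ) (hn : 2 ≤ n) (hm : 2 ≤ m) (hmn : m ≤ n)
    (Ω : Set (EuclideanSpace ℝ (Fin n))) (hΩo : IsOpen Ω) (hΩb : Bornology.IsBounded Ω)
    (w : EuclideanSpace ℝ (Fin n) → ℝ) (K : NNReal) (hw : LipschitzOnWith K w (closure Ω))
    (hw0 : ∀ x ∈ closure Ω, (∀ l : Fin n, (l : ℕ) < m → x l = 0) → w x = 0)
    (hyp : ∀ (η : EuclideanSpace ℝ (Fin n) → ℝ) (L : NNReal), LipschitzWith L η →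
      HasCompactSupport η →
      tsupport η ⊆ Ω \ {x : EuclideanSpace ℝ (Fin n) | ∀ l : Fin n, (l : ℕ) < m → x l = 0} →
      ENNReal.ofReal ((m : ℝ) - 1) *
          ∫⁻ x in Ω, ENNReal.ofReal
            (w x ^ 2 * η x ^ 2 / ∑ l : Fin n, if (l : ℕ) < m then x l ^ 2 else 0)
        ≤ ∫⁻ x in Ω, ENNReal.ofReal (w x ^ 2 * ‖fderiv ℝ η x‖ ^ 2)) :
    ∀ (η : EuclideanSpace ℝ (Fin n) → ℝ) (L : NNReal), LipschitzWith L η →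
      HasCompactSupport η → tsupport η ⊆ Ω →
      ENNReal.ofReal ((m : ℝ) - 1) *
          ∫⁻ x in Ω, ENNReal.ofReal
            (w x ^ 2 * η x ^ 2 / ∑ l : Fin n, if (l : ℕ) < m then x l ^ 2 else 0)
        ≤ ∫⁻ x in Ω, ENNReal.ofReal (w x ^ 2 * ‖fderiv ℝ η x‖ ^ 2) := by
  classical
  intro η L hη hηc hηs
  -- uniform bound on η
  obtain ⟨Cη, hCη0, hCη⟩ : ∃ C : ℝ, 0 ≤ C ∧ ∀ x, |η x| ≤ C := by
    obtain ⟨C, hC⟩ := hηc.exists_bound_of_continuousOn hη.continuous.continuousOn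
    refine ⟨max C 0, le_max_right _ _, fun x => ?_⟩
    by_cases hx : x ∈ tsupport η
    · exact le_trans (hC x hx) (le_max_left _ _)
    · simp [image_eq_zero_of_notMem_tsupport hx]
  -- coordinate bound on the support
  obtain ⟨R, hR1, hR⟩ : ∃ R : ℝ, 1 ≤ R ∧ ∀ x ∈ tsupport η, ∀ l : Fin n, |x l| ≤ R := by
    obtain ⟨r, hr⟩ := (Metric.isBounded_iff_subset_closedBall (0 : EuclideanSpace ℝ (Fin n))).1
      hηc.isBounded
    refine ⟨max r 1, le_max_right _ _, fun x hx l => ?_⟩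
    calc |x l| ≤ ‖x‖ := abs_coord_le_norm x l
    _ ≤ r := by simpa [mem_closedBall_zero_iff] using hr hx
    _ ≤ max r 1 := le_max_left _ _
  -- smallness of w near the singular set, on the support of η
  have hsmall : ∀ ε : ℝ, 0 < ε → ∃ δ₀ : ℝ, 0 < δ₀ ∧
      ∀ x ∈ tsupport η, sf n m x ≤ 2 * δ₀ → |w x| ≤ ε := by
    intro ε hε
    have hwc : ContinuousOn (fun x => |w x|) (tsupport η) :=
      ((hw.continuousOn).mono (hηs.trans subset_closure)).abs
    set C : Set (EuclideanSpace ℝ (Fin n)) :=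
      tsupport η ∩ (fun x => |w x|) ⁻¹' (Ici ε) with hCdef
    have hCcl : IsClosed C :=
      hwc.preimage_isClosed_of_isClosed (isClosed_tsupport η) isClosed_Ici
    have hCc : IsCompact C := hηc.of_isClosed_subset hCcl inter_subset_left
    by_cases hCne : C.Nonempty
    · obtain ⟨x₀, hx₀C, hmin⟩ := hCc.exists_isMinOn hCne (sf_cont.continuousOn (s := C))
      have hs₀ : 0 < sf n m x₀ := by
        rcases lt_or_eq_of_le (sf_nonneg x₀ (m := m)) with h | h
        · exact h
        · exfalso
          have hz : ∀ l : Fin n, (l : ℕ) < m → x₀ l = 0 := sf_eq_zero.1 h.symm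
          have hw0' : w x₀ = 0 := hw0 x₀ (subset_closure (hηs hx₀C.1)) hz
          have : ε ≤ |w x₀| := hx₀C.2
          rw [hw0'] at this
          simp at this
          linarith
      refine ⟨sf n m x₀ / 4, by positivity, fun x hx hsx => ?_⟩
      by_contra hcon
      push_neg at hcon
      have hxC : x ∈ C := ⟨hx, le_of_lt hcon⟩
      have := hmin hxC
      simp only [Set.mem_setOf_eq] at this
      have : sf n m x₀ ≤ sf n m x := this
      linarith
    · refine ⟨1, one_pos, fun x hx _ => ?_⟩
      by_contra hcon
      push_neg at hcon
      exact hCne ⟨x, hx, le_of_lt hcon⟩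
  set Ctot : ℝ := 16 * (2 * Cη * (L : ℝ) + Cη ^ 2) * (2 * R) ^ n with hCtot
  have hCtot0 : 0 ≤ Ctot := by positivity
  -- the main estimate for a fixed δ
  have main : ∀ ε : ℝ, 0 < ε → ∀ δ : ℝ, 0 < δ → δ ≤ 1 →
      (∀ x ∈ tsupport η, sf n m x ≤ 2 * δ → |w x| ≤ ε) →
      ENNReal.ofReal ((m : ℝ) - 1) *
          ∫⁻ x in Ω, ENNReal.ofReal
            (w x ^ 2 * (η x * cutf δ (sf n m x)) ^ 2 / Qs n m x)
        ≤ (∫⁻ x in Ω, ENNReal.ofReal (w x ^ 2 * ‖fderiv ℝ η x‖ ^ 2)) +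
            ENNReal.ofReal (ε ^ 2 * Ctot) := by
    intro ε hε δ hδ hδ1 hwε
    set ζ : EuclideanSpace ℝ (Fin n) → ℝ := fun x => cutf δ (sf n m x) with hζdef
    have hζ0 : ∀ x, 0 ≤ ζ x := fun x => cutf_nonneg
    have hζ1 : ∀ x, ζ x ≤ 1 := fun x => cutf_le_one
    have hζlip : LipschitzWith (Real.toNNReal δ⁻¹) ζ := by
      apply LipschitzWith.of_dist_le_mul
      intro x y
      rw [Real.dist_eq]
      calc |ζ x - ζ y| ≤ |sf n m x - sf n m y| / δ := cutf_lip hδ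
      _ ≤ dist x y / δ := by
          have h1 := (sf_lip (n := n) (m := m)).dist_le_mul x y
          rw [NNReal.coe_one, one_mul, Real.dist_eq] at h1
          exact (div_le_div_iff_of_pos_right hδ).2 h1
      _ = (Real.toNNReal δ⁻¹ : ℝ) * dist x y := by
          rw [Real.coe_toNNReal _ (by positivity), div_eq_inv_mul]
    set φ : EuclideanSpace ℝ (Fin n) → ℝ := fun x => η x * ζ x with hφdef
    have hφlip := lip_mul_bdd (A := Real.toNNReal Cη) (B := 1) hη hζlip
      (fun x => by rw [Real.coe_toNNReal _ hCη0]; exact hCη x)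
      (fun x => by rw [abs_of_nonneg (hζ0 x), NNReal.coe_one]; exact hζ1 x)
    have hφc : HasCompactSupport φ := hηc.mul_right
    have hφsupp : tsupport φ ⊆ Ω \ {x | ∀ l : Fin n, (l : ℕ) < m → x l = 0} := by
      have h1 : tsupport φ ⊆ tsupport η ∩ {x | δ ≤ sf n m x} := by
        apply closure_minimal _ ((isClosed_tsupport η).inter
          (isClosed_le continuous_const sf_cont))
        intro x hx
        have hx' : η x * ζ x ≠ 0 := hx
        rcases mul_ne_zero_iff.1 hx' with ⟨h2, h3⟩
        refine ⟨subset_tsupport η (Function.mem_support.2 h2), ?_⟩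
        show δ ≤ sf n m x
        by_contra h4
        push_neg at h4
        exact h3 (cutf_eq_zero hδ h4)
      intro x hx
      obtain ⟨hx1, hx2⟩ := h1 hx
      have hx2' : δ ≤ sf n m x := hx2
      refine ⟨hηs hx1, fun hS => ?_⟩
      have h5 : sf n m x = 0 := sf_eq_zero.2 hS
      linarith
    have hstep := hyp φ _ hφlip hφc hφsupp
    have hηD : ∀ x, ‖fderiv ℝ η x‖ ≤ (L : ℝ) := fun x => norm_fderiv_le_of_lipschitz ℝ hη
    have hζD : ∀ x, ‖fderiv ℝ ζ x‖ ≤ δ⁻¹ := by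
      intro x
      have h1 := norm_fderiv_le_of_lipschitz ℝ hζlip (x₀ := x)
      rwa [Real.coe_toNNReal _ (by positivity)] at h1
    set T : Set (EuclideanSpace ℝ (Fin n)) :=
      tsupport η ∩ {x | δ ≤ sf n m x ∧ sf n m x ≤ 2 * δ} with hTdef
    have hTmeas : MeasurableSet T :=
      ((isClosed_tsupport η).inter ((isClosed_le continuous_const sf_cont).inter
        (isClosed_le sf_cont continuous_const))).measurableSet
    set c₁ : ℝ := ε ^ 2 * (2 * Cη * (L : ℝ) * δ⁻¹ + Cη ^ 2 * δ⁻¹ ^ 2) with hc₁def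
    have hc₁0 : 0 ≤ c₁ := by positivity
    have hae : ∀ᵐ x ∂(volume.restrict Ω),
        ENNReal.ofReal (w x ^ 2 * ‖fderiv ℝ φ x‖ ^ 2)
          ≤ ENNReal.ofReal (w x ^ 2 * ζ x ^ 2 * ‖fderiv ℝ η x‖ ^ 2)
            + T.indicator (fun _ => ENNReal.ofReal c₁) x := by
      filter_upwards [ae_restrict_of_ae (hη.ae_differentiableAt.and hζlip.ae_differentiableAt)]
      rintro x ⟨hdη, hdζ⟩
      by_cases hx1 : x ∈ tsupport η
      · by_cases hx2 : sf n m x < δ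
        · have hev : φ =ᶠ[nhds x] (fun _ => (0:ℝ)) := by
            filter_upwards [(isOpen_lt sf_cont continuous_const).mem_nhds hx2] with y hy
            show η y * cutf δ (sf n m y) = 0
            rw [cutf_eq_zero hδ hy, mul_zero]
          have h0 : fderiv ℝ φ x = 0 := by
            rw [hev.fderiv_eq]
            exact fderiv_const_apply 0
          rw [h0]
          simp
        · by_cases hx3 : 2 * δ < sf n m x
          · have hev : φ =ᶠ[nhds x] η := by
              filter_upwards [(isOpen_lt continuous_const sf_cont).mem_nhds hx3] with y hy
              show η y * cutf δ (sf n m y) = η y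
              rw [cutf_eq_one hδ (le_of_lt hy), mul_one]
            have hζx : ζ x = 1 := cutf_eq_one hδ (le_of_lt hx3)
            rw [hev.fderiv_eq]
            have he : w x ^ 2 * ζ x ^ 2 * ‖fderiv ℝ η x‖ ^ 2
                = w x ^ 2 * ‖fderiv ℝ η x‖ ^ 2 := by rw [hζx]; ring
            rw [he]
            exact le_self_add
          · push_neg at hx2 hx3
            have hxT : x ∈ T := ⟨hx1, hx2, hx3⟩
            rw [Set.indicator_of_mem hxT, ← ENNReal.ofReal_add (by positivity) hc₁0]
            apply ENNReal.ofReal_le_ofReal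
            have hb : ‖fderiv ℝ φ x‖ ≤ ζ x * ‖fderiv ℝ η x‖ + |η x| * δ⁻¹ := by
              have hmul : fderiv ℝ φ x = η x • fderiv ℝ ζ x + ζ x • fderiv ℝ η x :=
                fderiv_mul hdη hdζ
              rw [hmul]
              calc ‖η x • fderiv ℝ ζ x + ζ x • fderiv ℝ η x‖
                  ≤ ‖η x • fderiv ℝ ζ x‖ + ‖ζ x • fderiv ℝ η x‖ := norm_add_le _ _
              _ = |η x| * ‖fderiv ℝ ζ x‖ + |ζ x| * ‖fderiv ℝ η x‖ := by
                  rw [norm_smul, norm_smul, Real.norm_eq_abs, Real.norm_eq_abs]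
              _ ≤ |η x| * δ⁻¹ + ζ x * ‖fderiv ℝ η x‖ := by
                  apply add_le_add
                  · exact mul_le_mul_of_nonneg_left (hζD x) (abs_nonneg _)
                  · rw [abs_of_nonneg (hζ0 x)]
              _ = ζ x * ‖fderiv ℝ η x‖ + |η x| * δ⁻¹ := add_comm _ _
            have hw2 : w x ^ 2 ≤ ε ^ 2 := by
              have h6 := hwε x hx1 hx3
              rw [show w x ^ 2 = |w x| ^ 2 from (sq_abs _).symm]
              exact pow_le_pow_left₀ (abs_nonneg _) h6 2
            have ha0 : 0 ≤ ζ x * ‖fderiv ℝ η x‖ := mul_nonneg (hζ0 x) (norm_nonneg _)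
            have hb0 : (0:ℝ) ≤ |η x| * δ⁻¹ := by positivity
            have h2 : ‖fderiv ℝ φ x‖ ^ 2 ≤ (ζ x * ‖fderiv ℝ η x‖ + |η x| * δ⁻¹) ^ 2 :=
              pow_le_pow_left₀ (norm_nonneg _) hb 2
            have haL : ζ x * ‖fderiv ℝ η x‖ ≤ (L : ℝ) := by
              calc ζ x * ‖fderiv ℝ η x‖ ≤ 1 * (L : ℝ) :=
                    mul_le_mul (hζ1 x) (hηD x) (norm_nonneg _) one_pos.le
              _ = (L : ℝ) := one_mul _
            have hbC : |η x| * δ⁻¹ ≤ Cη * δ⁻¹ :=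
              mul_le_mul_of_nonneg_right (hCη x) (by positivity)
            have hcross : 2 * (ζ x * ‖fderiv ℝ η x‖) * (|η x| * δ⁻¹) + (|η x| * δ⁻¹) ^ 2
                ≤ 2 * Cη * (L : ℝ) * δ⁻¹ + Cη ^ 2 * δ⁻¹ ^ 2 := by
              have h8 : (ζ x * ‖fderiv ℝ η x‖) * (|η x| * δ⁻¹) ≤ (L : ℝ) * (Cη * δ⁻¹) :=
                mul_le_mul haL hbC hb0 (NNReal.coe_nonneg L)
              have h9 : (|η x| * δ⁻¹) ^ 2 ≤ (Cη * δ⁻¹) ^ 2 := pow_le_pow_left₀ hb0 hbC 2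
              nlinarith
            have hcr0 : (0:ℝ) ≤ 2 * (ζ x * ‖fderiv ℝ η x‖) * (|η x| * δ⁻¹)
                + (|η x| * δ⁻¹) ^ 2 :=
              add_nonneg (mul_nonneg (mul_nonneg (by norm_num) ha0) hb0) (sq_nonneg _)
            calc w x ^ 2 * ‖fderiv ℝ φ x‖ ^ 2
                ≤ w x ^ 2 * (ζ x * ‖fderiv ℝ η x‖ + |η x| * δ⁻¹) ^ 2 :=
                  mul_le_mul_of_nonneg_left h2 (sq_nonneg _)
            _ = w x ^ 2 * (ζ x * ‖fderiv ℝ η x‖) ^ 2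
                + w x ^ 2 * (2 * (ζ x * ‖fderiv ℝ η x‖) * (|η x| * δ⁻¹)
                  + (|η x| * δ⁻¹) ^ 2) := by ring
            _ ≤ w x ^ 2 * ζ x ^ 2 * ‖fderiv ℝ η x‖ ^ 2 + c₁ := by
                apply add_le_add
                · apply le_of_eq
                  ring
                · rw [hc₁def]
                  exact mul_le_mul hw2 hcross hcr0 (by positivity)
      · have hev : φ =ᶠ[nhds x] (fun _ => (0:ℝ)) := by
          filter_upwards [(isClosed_tsupport η).isOpen_compl.mem_nhds hx1] with y hy
          show η y * ζ y = 0
          rw [image_eq_zero_of_notMem_tsupport hy, zero_mul]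
        have h0 : fderiv ℝ φ x = 0 := by
          rw [hev.fderiv_eq]
          exact fderiv_const_apply 0
        rw [h0]
        simp
    have hRHS : (∫⁻ x in Ω, ENNReal.ofReal (w x ^ 2 * ‖fderiv ℝ φ x‖ ^ 2))
        ≤ (∫⁻ x in Ω, ENNReal.ofReal (w x ^ 2 * ‖fderiv ℝ η x‖ ^ 2))
          + ENNReal.ofReal c₁ * volume T := by
      calc (∫⁻ x in Ω, ENNReal.ofReal (w x ^ 2 * ‖fderiv ℝ φ x‖ ^ 2))
          ≤ ∫⁻ x in Ω, (ENNReal.ofReal (w x ^ 2 * ζ x ^ 2 * ‖fderiv ℝ η x‖ ^ 2)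
              + T.indicator (fun _ => ENNReal.ofReal c₁) x) := lintegral_mono_ae hae
      _ = (∫⁻ x in Ω, ENNReal.ofReal (w x ^ 2 * ζ x ^ 2 * ‖fderiv ℝ η x‖ ^ 2))
            + ∫⁻ x in Ω, T.indicator (fun _ => ENNReal.ofReal c₁) x :=
          lintegral_add_right _ (measurable_const.indicator hTmeas)
      _ ≤ _ := by
          apply add_le_add
          · apply lintegral_mono
            intro x
            apply ENNReal.ofReal_le_ofReal
            have h1 : ζ x ^ 2 ≤ 1 := by nlinarith [hζ0 x, hζ1 x]
            calc w x ^ 2 * ζ x ^ 2 * ‖fderiv ℝ η x‖ ^ 2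
                = ζ x ^ 2 * (w x ^ 2 * ‖fderiv ℝ η x‖ ^ 2) := by ring
            _ ≤ 1 * (w x ^ 2 * ‖fderiv ℝ η x‖ ^ 2) :=
                mul_le_mul_of_nonneg_right h1 (by positivity)
            _ = w x ^ 2 * ‖fderiv ℝ η x‖ ^ 2 := one_mul _
          · calc (∫⁻ x in Ω, T.indicator (fun _ => ENNReal.ofReal c₁) x)
                ≤ ∫⁻ x, T.indicator (fun _ => ENNReal.ofReal c₁) x :=
                  setLIntegral_le_lintegral _ _
            _ = ∫⁻ _ in T, ENNReal.ofReal c₁ := lintegral_indicator hTmeas _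
            _ = ENNReal.ofReal c₁ * volume T := by rw [setLIntegral_const]
    have hn0 : 0 < n := by omega
    have hn1 : 1 < n := by omega
    set i0 : Fin n := ⟨0, hn0⟩ with hi0
    set i1 : Fin n := ⟨1, hn1⟩ with hi1
    set c : Fin n → ℝ := fun l => if (l : ℕ) < 2 then 2 * δ else R with hcdef
    have hvol : volume T ≤ ENNReal.ofReal (2 * (2 * δ)) * ENNReal.ofReal (2 * (2 * δ))
        * ENNReal.ofReal (2 * R) ^ n := by
      have hsub : T ⊆ (MeasurableEquiv.toLp 2 (Fin n → ℝ)).symm ⁻¹'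
          (univ.pi fun l => Icc (-(c l)) (c l)) := by
        rintro x ⟨hx1, hx2, hx3⟩
        intro l _
        have hxl : |x l| ≤ c l := by
          rw [hcdef]
          dsimp only
          split
          · next h =>
            have hlm : (l : ℕ) < m := lt_of_lt_of_le h hm
            have h1 : x l ^ 2 ≤ (2 * δ) ^ 2 := by
              calc x l ^ 2 ≤ Qs n m x := sq_le_Qs hlm
              _ = sf n m x ^ 2 := (sf_sq x).symm
              _ ≤ (2 * δ) ^ 2 := pow_le_pow_left₀ (sf_nonneg x) hx3 2
            calc |x l| = Real.sqrt (x l ^ 2) := (Real.sqrt_sq_eq_abs _).symm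
            _ ≤ Real.sqrt ((2 * δ) ^ 2) := Real.sqrt_le_sqrt h1
            _ = 2 * δ := Real.sqrt_sq (by positivity)
          · exact hR x hx1 l
        show x l ∈ Icc (-(c l)) (c l)
        exact mem_Icc.2 (abs_le.1 hxl)
      have hbox : volume ((MeasurableEquiv.toLp 2 (Fin n → ℝ)).symm ⁻¹'
          (univ.pi fun l => Icc (-(c l)) (c l)))
          = ∏ l : Fin n, ENNReal.ofReal (c l - -(c l)) := by
        rw [(EuclideanSpace.volume_preserving_symm_measurableEquiv_toLp (Fin n)).measure_preimage
          (MeasurableSet.univ_pi fun l => measurableSet_Icc).nullMeasurableSet]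
        rw [volume_pi_pi]
        simp [Real.volume_Icc]
      have hne : i0 ≠ i1 := by
        rw [hi0, hi1]
        simp [Fin.ext_iff]
      have hpair : (∏ l ∈ ({i0, i1} : Finset (Fin n)), ENNReal.ofReal (c l - -(c l)))
          = ENNReal.ofReal (2 * (2 * δ)) * ENNReal.ofReal (2 * (2 * δ)) := by
        rw [Finset.prod_pair hne]
        have e0 : c i0 = 2 * δ := by simp [hcdef, hi0]
        have e1 : c i1 = 2 * δ := by simp [hcdef, hi1]
        rw [e0, e1, show (2 * δ - -(2 * δ)) = 2 * (2 * δ) by ring]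
      have hcompl : (∏ l ∈ ({i0, i1} : Finset (Fin n))ᶜ, ENNReal.ofReal (c l - -(c l)))
          ≤ ENNReal.ofReal (2 * R) ^ n := by
        have hterm : ∀ l ∈ ({i0, i1} : Finset (Fin n))ᶜ,
            ENNReal.ofReal (c l - -(c l)) = ENNReal.ofReal (2 * R) := by
          intro l hl
          simp only [Finset.mem_compl, Finset.mem_insert, Finset.mem_singleton] at hl
          push_neg at hl
          obtain ⟨h1, h2⟩ := hl
          have d1 : (l : ℕ) ≠ 0 := by
            intro h
            apply h1
            rw [hi0]
            exact Fin.ext h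
          have d2 : (l : ℕ) ≠ 1 := by
            intro h
            apply h2
            rw [hi1]
            exact Fin.ext h
          have hl2 : ¬ ((l : ℕ) < 2) := by omega
          have ec : c l = R := by simp only [hcdef, if_neg hl2]
          rw [ec, show R - -R = 2 * R by ring]
        rw [Finset.prod_congr rfl hterm, Finset.prod_const]
        apply pow_le_pow_right₀ (ENNReal.one_le_ofReal.2 (by linarith))
        exact le_trans (Finset.card_le_univ _) (by simp)
      calc volume T ≤ volume ((MeasurableEquiv.toLp 2 (Fin n → ℝ)).symm ⁻¹'
            (univ.pi fun l => Icc (-(c l)) (c l))) := measure_mono hsub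
      _ = ∏ l : Fin n, ENNReal.ofReal (c l - -(c l)) := hbox
      _ = (∏ l ∈ ({i0, i1} : Finset (Fin n)), ENNReal.ofReal (c l - -(c l)))
            * ∏ l ∈ ({i0, i1} : Finset (Fin n))ᶜ, ENNReal.ofReal (c l - -(c l)) :=
          (Finset.prod_mul_prod_compl _ _).symm
      _ ≤ ENNReal.ofReal (2 * (2 * δ)) * ENNReal.ofReal (2 * (2 * δ))
            * ENNReal.ofReal (2 * R) ^ n := by
          rw [hpair]
          exact mul_le_mul_right hcompl _
    have herr : ENNReal.ofReal c₁ * volume T ≤ ENNReal.ofReal (ε ^ 2 * Ctot) := by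
      have h2R0 : (0:ℝ) ≤ 2 * R := by linarith
      calc ENNReal.ofReal c₁ * volume T
          ≤ ENNReal.ofReal c₁ * (ENNReal.ofReal (2 * (2 * δ)) * ENNReal.ofReal (2 * (2 * δ))
              * ENNReal.ofReal (2 * R) ^ n) := mul_le_mul_right hvol _
      _ = ENNReal.ofReal (c₁ * (2 * (2 * δ) * (2 * (2 * δ)) * (2 * R) ^ n)) := by
          rw [← ENNReal.ofReal_pow h2R0, ← ENNReal.ofReal_mul (by positivity),
            ← ENNReal.ofReal_mul (by positivity), ← ENNReal.ofReal_mul hc₁0]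
      _ ≤ ENNReal.ofReal (ε ^ 2 * Ctot) := by
          apply ENNReal.ofReal_le_ofReal
          have e1 : c₁ * (2 * (2 * δ) * (2 * (2 * δ)) * (2 * R) ^ n)
              = (16 * ε ^ 2 * (2 * Cη * (L : ℝ) * δ + Cη ^ 2)) * (2 * R) ^ n := by
            rw [hc₁def]
            field_simp
            ring
          rw [e1, hCtot]
          have h2 : (0:ℝ) ≤ (2 * R) ^ n := by positivity
          have h3 : 16 * ε ^ 2 * (2 * Cη * (L : ℝ) * δ + Cη ^ 2)
              ≤ 16 * ε ^ 2 * (2 * Cη * (L : ℝ) + Cη ^ 2) := by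
            nlinarith [mul_nonneg (sq_nonneg ε)
              (mul_nonneg (mul_nonneg hCη0 (NNReal.coe_nonneg L)) (sub_nonneg.2 hδ1))]
          calc (16 * ε ^ 2 * (2 * Cη * (L : ℝ) * δ + Cη ^ 2)) * (2 * R) ^ n
              ≤ (16 * ε ^ 2 * (2 * Cη * (L : ℝ) + Cη ^ 2)) * (2 * R) ^ n :=
                mul_le_mul_of_nonneg_right h3 h2
          _ = ε ^ 2 * (16 * (2 * Cη * (L : ℝ) + Cη ^ 2) * (2 * R) ^ n) := by ring
    calc ENNReal.ofReal ((m : ℝ) - 1) *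
        ∫⁻ x in Ω, ENNReal.ofReal
          (w x ^ 2 * (η x * cutf δ (sf n m x)) ^ 2 / Qs n m x)
        ≤ ∫⁻ x in Ω, ENNReal.ofReal (w x ^ 2 * ‖fderiv ℝ φ x‖ ^ 2) := hstep
    _ ≤ (∫⁻ x in Ω, ENNReal.ofReal (w x ^ 2 * ‖fderiv ℝ η x‖ ^ 2))
          + ENNReal.ofReal c₁ * volume T := hRHS
    _ ≤ (∫⁻ x in Ω, ENNReal.ofReal (w x ^ 2 * ‖fderiv ℝ η x‖ ^ 2)) +
          ENNReal.ofReal (ε ^ 2 * Ctot) := add_le_add_right herr _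
  -- pass to the limit
  refine ENNReal.le_of_forall_pos_le_add fun ε' hε' hG => ?_
  set ε : ℝ := min 1 ((ε' : ℝ) / (Ctot + 1)) with hεdef
  have hεpos : 0 < ε := lt_min one_pos (by positivity)
  obtain ⟨δ₀, hδ₀, hδ₀w⟩ := hsmall ε hεpos
  set δmin : ℝ := min δ₀ 1 with hδmin
  have hδminpos : 0 < δmin := lt_min hδ₀ one_pos
  set F : ℕ → EuclideanSpace ℝ (Fin n) → ENNReal := fun k x =>
    ENNReal.ofReal (w x ^ 2 * (η x * cutf (δmin / ((k : ℝ) + 1)) (sf n m x)) ^ 2 / Qs n m x)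
    with hF
  have hk : ∀ k : ℕ, 0 < δmin / ((k : ℝ) + 1) := fun k => by positivity
  have hmain : ∀ k : ℕ,
      ENNReal.ofReal ((m : ℝ) - 1) * ∫⁻ x in Ω, F k x
        ≤ (∫⁻ x in Ω, ENNReal.ofReal (w x ^ 2 * ‖fderiv ℝ η x‖ ^ 2)) +
            ENNReal.ofReal (ε ^ 2 * Ctot) := by
    intro k
    apply main ε hεpos _ (hk k)
    · calc δmin / ((k : ℝ) + 1) ≤ δmin / 1 := by
            apply div_le_div_of_nonneg_left hδminpos.le one_pos
            simp
      _ = δmin := div_one _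
      _ ≤ 1 := min_le_right _ _
    · intro x hx hsx
      apply hδ₀w x hx
      calc sf n m x ≤ 2 * (δmin / ((k : ℝ) + 1)) := hsx
      _ ≤ 2 * δmin := by
          have h1 : δmin / ((k : ℝ) + 1) ≤ δmin / 1 := by
            apply div_le_div_of_nonneg_left hδminpos.le one_pos
            simp
          rw [div_one] at h1
          linarith
      _ ≤ 2 * δ₀ := by
          have := min_le_left δ₀ 1
          rw [← hδmin] at this
          linarith
  -- monotone convergence
  have hwae : AEMeasurable w (volume.restrict Ω) :=
    (hw.continuousOn.mono subset_closure).aemeasurable hΩo.measurableSet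
  have hζcont : ∀ c : ℝ, Continuous (fun x : EuclideanSpace ℝ (Fin n) =>
      cutf c (sf n m x)) := by
    intro c
    unfold cutf
    exact continuous_const.min (continuous_const.max ((sf_cont.div_const c).sub continuous_const))
  have hFmeas : ∀ k : ℕ, AEMeasurable (F k) (volume.restrict Ω) := by
    intro k
    apply ENNReal.measurable_ofReal.comp_aemeasurable
    apply AEMeasurable.div _ Qs_cont.aemeasurable
    exact (hwae.pow_const 2).mul
      ((hη.continuous.mul (hζcont _)).pow 2).aemeasurable
  have hFmono : ∀ x, Monotone fun k => F k x := by
    intro x k k' hkk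
    apply ENNReal.ofReal_le_ofReal
    have hd : δmin / ((k' : ℝ) + 1) ≤ δmin / ((k : ℝ) + 1) := by
      apply div_le_div_of_nonneg_left hδminpos.le (by positivity)
      have : (k : ℝ) ≤ (k' : ℝ) := by exact_mod_cast hkk
      linarith
    have hζle : cutf (δmin / ((k : ℝ) + 1)) (sf n m x)
        ≤ cutf (δmin / ((k' : ℝ) + 1)) (sf n m x) :=
      cutf_mono_delta (sf_nonneg x) (hk k') hd
    have hnum : w x ^ 2 * (η x * cutf (δmin / ((k : ℝ) + 1)) (sf n m x)) ^ 2
        ≤ w x ^ 2 * (η x * cutf (δmin / ((k' : ℝ) + 1)) (sf n m x)) ^ 2 := by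
      have hζ2 : cutf (δmin / ((k : ℝ) + 1)) (sf n m x) ^ 2
          ≤ cutf (δmin / ((k' : ℝ) + 1)) (sf n m x) ^ 2 :=
        pow_le_pow_left₀ cutf_nonneg hζle 2
      calc w x ^ 2 * (η x * cutf (δmin / ((k : ℝ) + 1)) (sf n m x)) ^ 2
          = (w x ^ 2 * η x ^ 2) * cutf (δmin / ((k : ℝ) + 1)) (sf n m x) ^ 2 := by ring
      _ ≤ (w x ^ 2 * η x ^ 2) * cutf (δmin / ((k' : ℝ) + 1)) (sf n m x) ^ 2 :=
          mul_le_mul_of_nonneg_left hζ2 (by positivity)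
      _ = _ := by ring
    rcases eq_or_lt_of_le (Qs_nonneg x (m := m)) with hQ | hQ
    · rw [← hQ, div_zero, div_zero]
    · exact (div_le_div_iff_of_pos_right hQ).2 hnum
  have hFsup : ∀ x, (⨆ k, F k x)
      = ENNReal.ofReal (w x ^ 2 * η x ^ 2 / Qs n m x) := by
    intro x
    rcases eq_or_lt_of_le (Qs_nonneg x (m := m)) with hQ | hQ
    · have h0 : ∀ k, F k x = 0 := by
        intro k
        rw [hF]
        simp only [← hQ, div_zero, ENNReal.ofReal_zero]
      simp [h0, ← hQ, div_zero]
    · have hsx : 0 < sf n m x := Real.sqrt_pos.2 hQ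
      obtain ⟨k, hk2⟩ := exists_nat_ge (2 * δmin / sf n m x)
      apply le_antisymm
      · apply iSup_le
        intro j
        apply ENNReal.ofReal_le_ofReal
        apply (div_le_div_iff_of_pos_right hQ).2
        have h1 : cutf (δmin / ((j : ℝ) + 1)) (sf n m x) ≤ 1 := cutf_le_one
        have h0 : (0:ℝ) ≤ cutf (δmin / ((j : ℝ) + 1)) (sf n m x) := cutf_nonneg
        calc w x ^ 2 * (η x * cutf (δmin / ((j : ℝ) + 1)) (sf n m x)) ^ 2
            = (w x * η x) ^ 2 * cutf (δmin / ((j : ℝ) + 1)) (sf n m x) ^ 2 := by ring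
        _ ≤ (w x * η x) ^ 2 * 1 := mul_le_mul_of_nonneg_left (by nlinarith) (sq_nonneg _)
        _ = w x ^ 2 * η x ^ 2 := by ring
      · apply le_iSup_of_le k
        apply le_of_eq
        congr 1
        have hkpos := hk k
        have hcut : cutf (δmin / ((k : ℝ) + 1)) (sf n m x) = 1 := by
          apply cutf_eq_one hkpos
          have hk1 : (0:ℝ) < (k:ℝ) + 1 := by positivity
          rw [← mul_div_assoc, div_le_iff₀ hk1]
          have h4 : 2 * δmin / sf n m x ≤ (k:ℝ) + 1 := hk2.trans (by linarith)
          have h5 : 2 * δmin ≤ ((k:ℝ) + 1) * sf n m x := (div_le_iff₀ hsx).1 h4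
          nlinarith [h5]
        rw [hcut, mul_one]
  have hswap : (∫⁻ x in Ω, ENNReal.ofReal
        (w x ^ 2 * η x ^ 2 / ∑ l : Fin n, if (l : ℕ) < m then x l ^ 2 else 0))
      = ⨆ k, ∫⁻ x in Ω, F k x := by
    have e : (∫⁻ x in Ω, ENNReal.ofReal
        (w x ^ 2 * η x ^ 2 / ∑ l : Fin n, if (l : ℕ) < m then x l ^ 2 else 0))
        = ∫⁻ x in Ω, ENNReal.ofReal (w x ^ 2 * η x ^ 2 / Qs n m x) := rfl
    rw [e, ← lintegral_iSup' hFmeas (Filter.Eventually.of_forall hFmono)]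
    exact lintegral_congr fun x => (hFsup x).symm
  have hfin : ENNReal.ofReal (ε ^ 2 * Ctot) ≤ (ε' : ENNReal) := by
    have h1 : ε ^ 2 * Ctot ≤ (ε' : ℝ) := by
      have hε1 : ε ≤ 1 := min_le_left _ _
      have hε2 : ε ≤ (ε' : ℝ) / (Ctot + 1) := min_le_right _ _
      have h3 : ε ^ 2 ≤ ε := by nlinarith
      calc ε ^ 2 * Ctot ≤ ε * Ctot := mul_le_mul_of_nonneg_right h3 hCtot0
      _ ≤ ((ε' : ℝ) / (Ctot + 1)) * Ctot := mul_le_mul_of_nonneg_right hε2 hCtot0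
      _ ≤ (ε' : ℝ) := by
          rw [div_mul_eq_mul_div, div_le_iff₀ (by positivity)]
          nlinarith [ε'.coe_nonneg]
    calc ENNReal.ofReal (ε ^ 2 * Ctot) ≤ ENNReal.ofReal (ε' : ℝ) :=
          ENNReal.ofReal_le_ofReal h1
    _ = (ε' : ENNReal) := ENNReal.ofReal_coe_nnreal
  calc ENNReal.ofReal ((m : ℝ) - 1) *
      ∫⁻ x in Ω, ENNReal.ofReal
        (w x ^ 2 * η x ^ 2 / ∑ l : Fin n, if (l : ℕ) < m then x l ^ 2 else 0)
      = ENNReal.ofReal ((m : ℝ) - 1) * ⨆ k, ∫⁻ x in Ω, F k x := by rw [hswap]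
  _ = ⨆ k, ENNReal.ofReal ((m : ℝ) - 1) * ∫⁻ x in Ω, F k x := ENNReal.mul_iSup _ _
  _ ≤ (∫⁻ x in Ω, ENNReal.ofReal (w x ^ 2 * ‖fderiv ℝ η x‖ ^ 2)) +
        ENNReal.ofReal (ε ^ 2 * Ctot) := iSup_le hmain
  _ ≤ (∫⁻ x in Ω, ENNReal.ofReal (w x ^ 2 * ‖fderiv ℝ η x‖ ^ 2)) + (ε' : ENNReal) :=
        add_le_add_right hfin _
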